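/- Let f : ℝ → exp_2(ℝ) be continuous and fixed-point free, and define f₁(x) = min f(x) and f₂(x) = max f(x). Then f₁ and f₂ are continuous fixed-point free real-valued functions on ℝ, and if 𝓕₁ and 𝓕₂ are finite closed colorings of f₁ and f₂ respectively, then { A ∩ B : A ∈ 𝓕₁, B ∈ 𝓕₂ } is a finite closed coloring of f. -/

import Mathlib

open Set

/-- The Vietoris topology on the powerset of `Z`, generated by the sets
`{A | A ⊆ U}` and `{A | A ∩ U ≠ ∅}` for `U` open.  Its restriction to the
nonempty closed subsets of `Z` is the usual Vietoris topology on `2^Z`. -/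
def vietoris (Z : Type*) [TopologicalSpace Z] : TopologicalSpace (Set Z) :=
  TopologicalSpace.generateFrom
    ({S | ∃ U : Set Z, IsOpen U ∧ S = {A : Set Z | A ⊆ U}} ∪
     {S | ∃ U : Set Z, IsOpen U ∧ S = {A : Set Z | (A ∩ U).Nonempty}})

/-- Continuity of a set-valued map with respect to the Vietoris topology. -/
def VCont {X Z : Type*} [tX : TopologicalSpace X] [TopologicalSpace Z] (f : X → Set Z) : Prop :=
  @Continuous X (Set Z) tX (vietoris Z) f

lemma vcont_sub {f : ℝ → Set ℝ} (hcont : VCont f) {U : Set ℝ} (hU : IsOpen U) :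
    IsOpen {x | f x ⊆ U} := by
  have h : @IsOpen (Set ℝ) (vietoris ℝ) {A | A ⊆ U} :=
    TopologicalSpace.GenerateOpen.basic _ (Or.inl ⟨U, hU, rfl⟩)
  exact @Continuous.isOpen_preimage _ _ _ (vietoris ℝ) f hcont _ h

lemma vcont_hit {f : ℝ → Set ℝ} (hcont : VCont f) {U : Set ℝ} (hU : IsOpen U) :
    IsOpen {x | (f x ∩ U).Nonempty} := by
  have h : @IsOpen (Set ℝ) (vietoris ℝ) {A | (A ∩ U).Nonempty} :=
    TopologicalSpace.GenerateOpen.basic _ (Or.inr ⟨U, hU, rfl⟩)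
  exact @Continuous.isOpen_preimage _ _ _ (vietoris ℝ) f hcont _ h

lemma mem_pair_of_small {s : Set ℝ} (hne : s.Nonempty) (hfin : s.Finite)
    (hcard : s.ncard ≤ 2) : s ⊆ {sInf s, sSup s} := by
  intro a ha
  by_contra h
  simp only [mem_insert_iff, mem_singleton_iff] at h
  push_neg at h
  obtain ⟨h1, h2⟩ := h
  have hm : sInf s ∈ s := hne.csInf_mem hfin
  have hM : sSup s ∈ s := hne.csSup_mem hfin
  have hma : sInf s < a := lt_of_le_of_ne (csInf_le hfin.bddBelow ha) (Ne.symm h1)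
  have haM : a < sSup s := lt_of_le_of_ne (le_csSup hfin.bddAbove ha) h2
  have hsub : ({sInf s, a, sSup s} : Set ℝ) ⊆ s := by
    intro z hz
    simp only [mem_insert_iff, mem_singleton_iff] at hz
    rcases hz with rfl | rfl | rfl <;> assumption
  have h3 : ({sInf s, a, sSup s} : Set ℝ).ncard = 3 := by
    rw [Set.ncard_insert_of_notMem, Set.ncard_insert_of_notMem, Set.ncard_singleton]
    · simp only [mem_singleton_iff]; exact haM.ne
    · simp only [mem_insert_iff, mem_singleton_iff]
      push_neg
      exact ⟨hma.ne, (hma.trans haM).ne⟩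
  have := Set.ncard_le_ncard hsub hfin
  omega

theorem stmt14 (f : ℝ → Set ℝ)
    (hval : ∀ x, (f x).Nonempty ∧ (f x).Finite ∧ (f x).ncard ≤ 2)
    (hcont : VCont f)
    (hfree : ∀ x, x ∉ f x) :
    Continuous (fun x => sInf (f x)) ∧ Continuous (fun x => sSup (f x)) ∧
    (∀ x, sInf (f x) ≠ x) ∧ (∀ x, sSup (f x) ≠ x) ∧
    ∀ 𝓕₁ 𝓕₂ : Finset (Set ℝ),
      ((∀ x : ℝ, ∃ C ∈ 𝓕₁, x ∈ C) ∧
        ∀ C ∈ 𝓕₁, IsClosed C ∧ Disjoint ((fun x => sInf (f x)) '' C) C) →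
      ((∀ x : ℝ, ∃ C ∈ 𝓕₂, x ∈ C) ∧
        ∀ C ∈ 𝓕₂, IsClosed C ∧ Disjoint ((fun x => sSup (f x)) '' C) C) →
      ∀ 𝓕 : Finset (Set ℝ),
        (∀ S : Set ℝ, S ∈ 𝓕 ↔ ∃ A ∈ 𝓕₁, ∃ B ∈ 𝓕₂, S = A ∩ B) →
        (∀ x : ℝ, ∃ F ∈ 𝓕, x ∈ F) ∧
          ∀ F ∈ 𝓕, IsClosed F ∧ Disjoint F (⋃ x ∈ F, f x) := by
  have hmemI : ∀ x, sInf (f x) ∈ f x := fun x => (hval x).1.csInf_mem (hval x).2.1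
  have hmemS : ∀ x, sSup (f x) ∈ f x := fun x => (hval x).1.csSup_mem (hval x).2.1
  have hpair : ∀ x, f x ⊆ {sInf (f x), sSup (f x)} := fun x =>
    mem_pair_of_small (hval x).1 (hval x).2.1 (hval x).2.2
  have hcontI : Continuous fun x => sInf (f x) := by
    rw [continuous_iff_continuousAt]
    intro x₀
    rw [ContinuousAt, Metric.tendsto_nhds]
    intro ε hε
    set m := sInf (f x₀) with hm
    set M := sSup (f x₀) with hM
    have h1 : IsOpen {x | f x ⊆ Metric.ball m ε ∪ Metric.ball M ε} :=
      vcont_sub hcont (Metric.isOpen_ball.union Metric.isOpen_ball)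
    have h2 : IsOpen {x | (f x ∩ Metric.ball m ε).Nonempty} :=
      vcont_hit hcont Metric.isOpen_ball
    have hx1 : x₀ ∈ {x | f x ⊆ Metric.ball m ε ∪ Metric.ball M ε} := by
      intro a ha
      rcases hpair x₀ ha with rfl | rfl
      · exact Or.inl (Metric.mem_ball_self hε)
      · exact Or.inr (Metric.mem_ball_self hε)
    have hx2 : x₀ ∈ {x | (f x ∩ Metric.ball m ε).Nonempty} :=
      ⟨m, hmemI x₀, Metric.mem_ball_self hε⟩
    filter_upwards [(h1.inter h2).mem_nhds ⟨hx1, hx2⟩] with x hx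
    obtain ⟨hxU, p, hp, hpball⟩ := hx
    have hmM : m ≤ M := csInf_le_csSup (hval x₀).1 (hval x₀).2.1.bddBelow (hval x₀).2.1.bddAbove
    have hle : sInf (f x) ≤ p := csInf_le (hval x).2.1.bddBelow hp
    rw [Metric.mem_ball, Real.dist_eq] at hpball
    have hpb := abs_lt.1 hpball
    have hub : sInf (f x) < m + ε := by linarith
    have hlb : m - ε < sInf (f x) := by
      rcases hxU (hmemI x) with h | h <;>
        · rw [Metric.mem_ball, Real.dist_eq] at h
          have := abs_lt.1 h
          linarith
    rw [Real.dist_eq, abs_lt]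
    constructor <;> linarith
  have hcontS : Continuous fun x => sSup (f x) := by
    rw [continuous_iff_continuousAt]
    intro x₀
    rw [ContinuousAt, Metric.tendsto_nhds]
    intro ε hε
    set m := sInf (f x₀) with hm
    set M := sSup (f x₀) with hM
    have h1 : IsOpen {x | f x ⊆ Metric.ball m ε ∪ Metric.ball M ε} :=
      vcont_sub hcont (Metric.isOpen_ball.union Metric.isOpen_ball)
    have h2 : IsOpen {x | (f x ∩ Metric.ball M ε).Nonempty} :=
      vcont_hit hcont Metric.isOpen_ball
    have hx1 : x₀ ∈ {x | f x ⊆ Metric.ball m ε ∪ Metric.ball M ε} := by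
      intro a ha
      rcases hpair x₀ ha with rfl | rfl
      · exact Or.inl (Metric.mem_ball_self hε)
      · exact Or.inr (Metric.mem_ball_self hε)
    have hx2 : x₀ ∈ {x | (f x ∩ Metric.ball M ε).Nonempty} :=
      ⟨M, hmemS x₀, Metric.mem_ball_self hε⟩
    filter_upwards [(h1.inter h2).mem_nhds ⟨hx1, hx2⟩] with x hx
    obtain ⟨hxU, p, hp, hpball⟩ := hx
    have hmM : m ≤ M := csInf_le_csSup (hval x₀).1 (hval x₀).2.1.bddBelow (hval x₀).2.1.bddAbove
    have hle : p ≤ sSup (f x) := le_csSup (hval x).2.1.bddAbove hp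
    rw [Metric.mem_ball, Real.dist_eq] at hpball
    have hpb := abs_lt.1 hpball
    have hlb : M - ε < sSup (f x) := by linarith
    have hub : sSup (f x) < M + ε := by
      rcases hxU (hmemS x) with h | h <;>
        · rw [Metric.mem_ball, Real.dist_eq] at h
          have := abs_lt.1 h
          linarith
    rw [Real.dist_eq, abs_lt]
    constructor <;> linarith
  refine ⟨hcontI, hcontS, ?_, ?_, ?_⟩
  · intro x h
    have := hmemI x
    rw [h] at this
    exact hfree x this
  · intro x h
    have := hmemS x
    rw [h] at this
    exact hfree x this
  · intro 𝓕₁ 𝓕₂ ⟨hcov1, hcol1⟩ ⟨hcov2, hcol2⟩ 𝓕 h𝓕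
    constructor
    · intro x
      obtain ⟨A, hA, hxA⟩ := hcov1 x
      obtain ⟨B, hB, hxB⟩ := hcov2 x
      exact ⟨A ∩ B, (h𝓕 _).2 ⟨A, hA, B, hB, rfl⟩, hxA, hxB⟩
    · intro F hF
      obtain ⟨A, hA, B, hB, rfl⟩ := (h𝓕 F).1 hF
      refine ⟨(hcol1 A hA).1.inter (hcol2 B hB).1, ?_⟩
      rw [Set.disjoint_left]
      rintro y ⟨hyA, hyB⟩ hy
      simp only [mem_iUnion, exists_prop] at hy
      obtain ⟨x, ⟨hxA, hxB⟩, hyfx⟩ := hy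
      rcases hpair x hyfx with rfl | rfl
      · exact Set.disjoint_left.1 (hcol1 A hA).2 ⟨x, hxA, rfl⟩ hyA
      · exact Set.disjoint_left.1 (hcol2 B hB).2 ⟨x, hxB, rfl⟩ hyB
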